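/- Let 0 ≤ α < d, δ > 0 and f ∈ L¹(ℝ^d). Then the truncated centered fractional maximal function M_α^δ f, defined by M_α^δ f(x) = sup_{r > δ} r^α · (1/|B(x,r)|) ∫_{B(x,r)} |f(y)| dy, is Lipschitz continuous on ℝ^d. -/

import Mathlib

open MeasureTheory

/-- The truncated centered fractional Hardy–Littlewood maximal function
`M_α^δ f(x) = sup_{r > δ} r^α ⨍_{B(x,r)} |f|`. -/
noncomputable def truncCenteredFracMax {d : ℕ} (α δ : ℝ)
    (f : EuclideanSpace ℝ (Fin d) → ℝ) (x : EuclideanSpace ℝ (Fin d)) : ℝ :=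
  ⨆ (r : ℝ) (_ : δ < r), r ^ α * ⨍ y in Metric.ball x r, |f y|

/-- for `0 ≤ α < d`, `δ > 0` and `f ∈ L¹(ℝ^d)`, the truncated
centered fractional maximal function `M_α^δ f` is Lipschitz continuous. -/
theorem statement2 {d : ℕ} (α δ : ℝ) (hα : 0 ≤ α) (hαd : α < d) (hδ : 0 < δ)
    (f : EuclideanSpace ℝ (Fin d) → ℝ) (hf : Integrable f) :
    ∃ L : NNReal, LipschitzWith L (truncCenteredFracMax α δ f) := by
  set c : ℝ := (volume (Metric.ball (0 : EuclideanSpace ℝ (Fin d)) 1)).toReal with hcdef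
  have hc : 0 < c := by
    apply ENNReal.toReal_pos
    · exact (Metric.measure_ball_pos volume 0 one_pos).ne'
    · exact measure_ball_lt_top.ne
  -- total integral of |f|
  set N : ℝ := ∫ y, |f y| with hNdef
  have hfa : Integrable (fun y => |f y|) := hf.abs
  have hfnn : 0 ≤ᵐ[volume] (fun y : EuclideanSpace ℝ (Fin d) => |f y|) :=
    Filter.Eventually.of_forall fun y => abs_nonneg _
  have hN : 0 ≤ N := integral_nonneg fun y => abs_nonneg _
  -- abbreviation
  set g : EuclideanSpace ℝ (Fin d) → ℝ → ℝ := fun x r => r ^ (α - d) * c⁻¹ * ∫ y in Metric.ball x r, |f y|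
    with hgdef
  have hInn : ∀ (x : EuclideanSpace ℝ (Fin d)) (r : ℝ), 0 ≤ ∫ y in Metric.ball x r, |f y| := fun x r =>
    setIntegral_nonneg measurableSet_ball fun y _ => abs_nonneg _
  have hIN : ∀ (x : EuclideanSpace ℝ (Fin d)) (r : ℝ), (∫ y in Metric.ball x r, |f y|) ≤ N := fun x r =>
    setIntegral_le_integral hfa hfnn
  have hgnn : ∀ (x : EuclideanSpace ℝ (Fin d)) (r : ℝ), 0 < r → 0 ≤ g x r := by
    intro x r hr
    exact mul_nonneg (mul_nonneg (Real.rpow_nonneg hr.le _) (inv_nonneg.2 hc.le)) (hInn x r)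
  -- the rewriting of the supremand
  have heq : ∀ (x : EuclideanSpace ℝ (Fin d)) (r : ℝ), δ < r →
      r ^ α * ⨍ y in Metric.ball x r, |f y| = g x r := by
    intro x r hr
    have hr0 : 0 < r := hδ.trans hr
    have hball : (volume (Metric.ball x r)).toReal = r ^ (d : ℝ) * c := by
      rw [Measure.addHaar_ball_of_pos volume x hr0, finrank_euclideanSpace_fin,
        ENNReal.toReal_mul, ENNReal.toReal_ofReal (by positivity), ← Real.rpow_natCast r d]
    rw [setAverage_eq, smul_eq_mul, measureReal_def, hball]
    rw [hgdef]
    have h1 : r ^ α * (r ^ (d : ℝ) * c)⁻¹ = r ^ (α - d) * c⁻¹ := by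
      rw [mul_inv, Real.rpow_sub hr0, div_eq_mul_inv]
      ring
    calc r ^ α * ((r ^ (d : ℝ) * c)⁻¹ * ∫ y in Metric.ball x r, |f y|)
        = (r ^ α * (r ^ (d : ℝ) * c)⁻¹) * ∫ y in Metric.ball x r, |f y| := by ring
      _ = r ^ (α - d) * c⁻¹ * ∫ y in Metric.ball x r, |f y| := by rw [h1]
  -- mean value estimate for t ↦ t ^ (α - d) on [δ, ∞)
  have hmvt : ∀ r s : ℝ, δ ≤ r → r ≤ s →
      r ^ (α - d) - s ^ (α - d) ≤ (d - α) * δ ^ (α - d - 1) * (s - r) := by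
    intro r s hr hrs
    have hδr : (0 : ℝ) < r := hδ.trans_le hr
    have hkey : ‖s ^ (α - d) - r ^ (α - d)‖ ≤ ((d - α) * δ ^ (α - d - 1)) * ‖s - r‖ := by
      apply Convex.norm_image_sub_le_of_norm_hasDerivWithin_le
        (f := fun t : ℝ => t ^ (α - (d : ℝ))) (x := r) (y := s)
        (f' := fun t => (α - d) * t ^ (α - d - 1)) (s := Set.Ici δ)
      · intro t ht
        exact (Real.hasDerivAt_rpow_const (Or.inl (hδ.trans_le ht).ne')).hasDerivWithinAt
      · intro t ht
        have ht0 : 0 < t := hδ.trans_le ht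
        rw [Real.norm_eq_abs, abs_mul, abs_of_nonpos (by linarith : α - d ≤ 0)]
        have h2 : |t ^ (α - d - 1)| = t ^ (α - d - 1) :=
          abs_of_nonneg (Real.rpow_nonneg ht0.le _)
        rw [h2, neg_sub]
        apply mul_le_mul_of_nonneg_left _ (by linarith : 0 ≤ d - α)
        exact Real.rpow_le_rpow_of_nonpos hδ ht (by linarith)
      · exact convex_Ici δ
      · exact hr
      · exact le_trans hr hrs
    have h3 : r ^ (α - d) - s ^ (α - d) ≤ ‖s ^ (α - d) - r ^ (α - d)‖ := by
      rw [Real.norm_eq_abs, abs_sub_comm]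
      exact le_abs_self _
    have h4 : ‖s - r‖ = s - r := by
      rw [Real.norm_eq_abs]; exact abs_of_nonneg (by linarith)
    calc r ^ (α - d) - s ^ (α - d) ≤ ((d - α) * δ ^ (α - d - 1)) * ‖s - r‖ :=
          h3.trans hkey
      _ = (d - α) * δ ^ (α - d - 1) * (s - r) := by rw [h4]
  -- uniform bound
  set C : ℝ := δ ^ (α - d) * c⁻¹ * N with hCdef
  have hC0 : 0 ≤ C := by positivity
  have hbound : ∀ (x : EuclideanSpace ℝ (Fin d)) (r : ℝ), δ < r → g x r ≤ C := by
    intro x r hr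
    have hr0 : 0 < r := hδ.trans hr
    have h1 : r ^ (α - d) ≤ δ ^ (α - d) :=
      Real.rpow_le_rpow_of_nonpos hδ hr.le (by linarith)
    calc g x r ≤ r ^ (α - d) * c⁻¹ * N := by
          exact mul_le_mul_of_nonneg_left (hIN x r)
            (mul_nonneg (Real.rpow_nonneg hr0.le _) (inv_nonneg.2 hc.le))
      _ ≤ δ ^ (α - d) * c⁻¹ * N := by
          apply mul_le_mul_of_nonneg_right _ hN
          exact mul_le_mul_of_nonneg_right h1 (inv_nonneg.2 hc.le)
  -- the Lipschitz constant
  set K : ℝ := (d - α) * δ ^ (α - d - 1) * c⁻¹ * N with hKdef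
  have hK0 : 0 ≤ K := by
    have : (0:ℝ) ≤ d - α := by linarith
    positivity
  -- the key pointwise estimate
  have hkey : ∀ (x x' : EuclideanSpace ℝ (Fin d)) (r : ℝ), δ < r →
      g x r ≤ g x' (r + dist x x') + K * dist x x' := by
    intro x x' r hr
    set h : ℝ := dist x x' with hhdef
    have h0 : 0 ≤ h := dist_nonneg
    have hr0 : 0 < r := hδ.trans hr
    set s : ℝ := r + h with hsdef
    have hs0 : 0 < s := by positivity
    have hrs : r ≤ s := by simp [hsdef, h0]
    have hsub : Metric.ball x r ⊆ Metric.ball x' s := by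
      apply Metric.ball_subset_ball'
      exact le_rfl
    have hI : (∫ y in Metric.ball x r, |f y|) ≤ ∫ y in Metric.ball x' s, |f y| := by
      apply setIntegral_mono_set hfa.integrableOn
        (Filter.Eventually.of_forall fun y => abs_nonneg _)
      exact Filter.Eventually.of_forall hsub
    have step1 : g x r ≤ r ^ (α - d) * c⁻¹ * ∫ y in Metric.ball x' s, |f y| :=
      mul_le_mul_of_nonneg_left hI
        (mul_nonneg (Real.rpow_nonneg hr0.le _) (inv_nonneg.2 hc.le))
    have step2 : r ^ (α - d) * c⁻¹ * (∫ y in Metric.ball x' s, |f y|) =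
        g x' s + (r ^ (α - d) - s ^ (α - d)) * (c⁻¹ * ∫ y in Metric.ball x' s, |f y|) := by
      simp only [hgdef]; ring
    have hdiff : 0 ≤ r ^ (α - d) - s ^ (α - d) := by
      have := Real.rpow_le_rpow_of_nonpos hr0 hrs (by linarith : α - (d:ℝ) ≤ 0)
      linarith
    have step3 : (r ^ (α - d) - s ^ (α - d)) * (c⁻¹ * ∫ y in Metric.ball x' s, |f y|)
        ≤ ((d - α) * δ ^ (α - d - 1) * (s - r)) * (c⁻¹ * N) := by
      apply mul_le_mul (hmvt r s hr.le hrs)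
        (mul_le_mul_of_nonneg_left (hIN x' s) (inv_nonneg.2 hc.le))
        (mul_nonneg (inv_nonneg.2 hc.le) (hInn x' s)) _
      have hsr : 0 ≤ s - r := by linarith
      have hda : (0:ℝ) ≤ d - α := by linarith
      positivity
    have hsr : s - r = h := by rw [hsdef]; ring
    calc g x r ≤ g x' s + (r ^ (α - d) - s ^ (α - d)) *
            (c⁻¹ * ∫ y in Metric.ball x' s, |f y|) := by
          rw [← step2]; exact step1
      _ ≤ g x' s + ((d - α) * δ ^ (α - d - 1) * (s - r)) * (c⁻¹ * N) := by linarith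
      _ = g x' s + K * h := by rw [hsr, hKdef]; ring
  -- properties of the maximal function
  set F : EuclideanSpace ℝ (Fin d) → ℝ := truncCenteredFracMax α δ f with hFdef
  have hFeq : ∀ x : EuclideanSpace ℝ (Fin d), F x = ⨆ (r : ℝ) (_ : δ < r), r ^ α * ⨍ y in Metric.ball x r, |f y| :=
    fun _ => rfl
  have hFnn : ∀ x : EuclideanSpace ℝ (Fin d), 0 ≤ F x := by
    intro x
    rw [hFeq]
    apply Real.iSup_nonneg
    intro r
    apply Real.iSup_nonneg
    intro hr
    rw [heq x r hr]
    exact hgnn x r (hδ.trans hr)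
  have hgleF : ∀ (x : EuclideanSpace ℝ (Fin d)) (r : ℝ), δ < r → g x r ≤ F x := by
    intro x r hr
    rw [hFeq]
    have hb : BddAbove (Set.range fun r : ℝ =>
        ⨆ (_ : δ < r), r ^ α * ⨍ y in Metric.ball x r, |f y|) := by
      refine ⟨C, ?_⟩
      rintro _ ⟨r', rfl⟩
      apply Real.iSup_le _ hC0
      intro hr'
      rw [heq x r' hr']
      exact hbound x r' hr'
    calc g x r = ⨆ (_ : δ < r), r ^ α * ⨍ y in Metric.ball x r, |f y| := by
          rw [ciSup_pos hr, heq x r hr]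
      _ ≤ ⨆ (r : ℝ) (_ : δ < r), r ^ α * ⨍ y in Metric.ball x r, |f y| :=
          le_ciSup hb r
  -- main estimate
  have hmain : ∀ x x' : EuclideanSpace ℝ (Fin d), F x ≤ F x' + K * dist x x' := by
    intro x x'
    have hrhs : 0 ≤ F x' + K * dist x x' := by
      have := hFnn x'
      have := mul_nonneg hK0 (dist_nonneg (x := x) (y := x'))
      linarith
    rw [hFeq]
    apply Real.iSup_le _ hrhs
    intro r
    apply Real.iSup_le _ hrhs
    intro hr
    rw [heq x r hr]
    have h1 := hkey x x' r hr
    have h2 : g x' (r + dist x x') ≤ F x' := by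
      apply hgleF
      have : 0 ≤ dist x x' := dist_nonneg
      linarith
    linarith
  -- conclusion
  refine ⟨Real.toNNReal K, LipschitzWith.of_dist_le_mul fun x y => ?_⟩
  show dist (F x) (F y) ≤ Real.toNNReal K * dist x y
  rw [Real.coe_toNNReal K hK0, Real.dist_eq]
  rw [abs_sub_le_iff]
  constructor
  · have := hmain x y
    linarith
  · have := hmain y x
    rw [dist_comm y x] at this
    linarith
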